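/- Let γ : [0,1] → X be an injective continuous map into a metric space (an arc) with endpoints p = γ(0), q = γ(1). Suppose H^1(γ([0,1])) = d(p,q) = diam(γ([0,1])). Then for all x, y in the image of γ, the subarc of γ between x and y satisfies H^1(γ(x,y)) = d(x,y), and consequently γ([0,1]) is isometric to the closed line segment [0, diam(γ([0,1]))]. -/

import Mathlib

open scoped ENNReal
open MeasureTheory

lemma dist_le_H1 {X : Type*} [MetricSpace X] [MeasurableSpace X] [BorelSpace X]
    {s : Set X} (hs : IsPreconnected s) {x y : X} (hx : x ∈ s) (hy : y ∈ s) :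
    ENNReal.ofReal (dist x y) ≤ μH[1] s := by
  have hf : LipschitzWith 1 (dist x) := LipschitzWith.dist_right x
  have hle : μH[1] (dist x '' s) ≤ μH[1] s := by
    simpa using hf.hausdorffMeasure_image_le zero_le_one s
  have hconn : IsPreconnected (dist x '' s) :=
    hs.image _ (hf.continuous.continuousOn)
  have hsub : Set.Icc 0 (dist x y) ⊆ dist x '' s :=
    hconn.Icc_subset ⟨x, hx, dist_self x⟩ ⟨y, hy, rfl⟩
  calc ENNReal.ofReal (dist x y)
      = μH[1] (Set.Icc 0 (dist x y)) := by
        rw [MeasureTheory.hausdorffMeasure_real, Real.volume_Icc, sub_zero]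
    _ ≤ μH[1] (dist x '' s) := measure_mono hsub
    _ ≤ μH[1] s := hle

lemma three_eq_aux {a1 a2 a3 b1 b2 b3 : ℝ≥0∞} (h1 : a1 ≤ b1) (h2 : a2 ≤ b2) (h3 : a3 ≤ b3)
    (hs : b1 + b2 + b3 ≤ a1 + a2 + a3) (hb : b1 + b2 + b3 ≠ ⊤) :
    b1 = a1 ∧ b2 = a2 ∧ b3 = a3 := by
  have f1 : b1 ≠ ⊤ := fun h => hb (by simp [h])
  have f2 : b2 ≠ ⊤ := fun h => hb (by simp [h])
  have f3 : b3 ≠ ⊤ := fun h => hb (by simp [h])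
  refine ⟨le_antisymm ?_ h1, le_antisymm ?_ h2, le_antisymm ?_ h3⟩
  · have : b1 + b2 + b3 ≤ a1 + b2 + b3 :=
      hs.trans (add_le_add (add_le_add le_rfl h2) h3)
    exact ENNReal.le_of_add_le_add_right (ENNReal.add_ne_top.2 ⟨f2, f3⟩)
      (by simpa [add_assoc] using this)
  · have : b1 + b2 + b3 ≤ b1 + a2 + b3 :=
      hs.trans (add_le_add (add_le_add h1 le_rfl) h3)
    have := ENNReal.le_of_add_le_add_right f3 this
    exact ENNReal.le_of_add_le_add_left f1 this
  · have : b1 + b2 + b3 ≤ b1 + b2 + a3 :=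
      hs.trans (add_le_add (add_le_add h1 h2) le_rfl)
    exact ENNReal.le_of_add_le_add_left (ENNReal.add_ne_top.2 ⟨f1, f2⟩) (by
      simpa [add_assoc] using this)

/-- Key splitting lemma: the subarc from `a` to `b` has `H¹`-measure exactly
`dist (γ a) (γ b)`, and the triangle inequality through `γ a, γ b` is an equality. -/
lemma key_split {X : Type*} [MetricSpace X] [MeasurableSpace X] [BorelSpace X]
    (γ : ℝ → X) (hcont : ContinuousOn γ (Set.Icc 0 1))
    (hinj : Set.InjOn γ (Set.Icc 0 1))
    (h1 : μH[1] (γ '' Set.Icc 0 1) = ENNReal.ofReal (dist (γ 0) (γ 1)))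
    {a b : ℝ} (ha : 0 ≤ a) (hab : a ≤ b) (hb : b ≤ 1) :
    μH[1] (γ '' Set.Icc a b) = ENNReal.ofReal (dist (γ a) (γ b)) ∧
    dist (γ 0) (γ a) + dist (γ a) (γ b) + dist (γ b) (γ 1) = dist (γ 0) (γ 1) := by
  haveI : NullSingletonClass (μH[1] : Measure X) := Measure.nullSingletonClass_hausdorff X one_pos
  have hsubab : Set.Icc a b ⊆ Set.Icc (0:ℝ) 1 := Set.Icc_subset_Icc ha hb
  have hsub0a : Set.Icc (0:ℝ) a ⊆ Set.Icc (0:ℝ) 1 := Set.Icc_subset_Icc le_rfl (hab.trans hb)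
  have hsubb1 : Set.Icc b 1 ⊆ Set.Icc (0:ℝ) 1 := Set.Icc_subset_Icc (ha.trans hab) le_rfl
  have hcomp : ∀ {u v : ℝ}, Set.Icc u v ⊆ Set.Icc (0:ℝ) 1 → IsCompact (γ '' Set.Icc u v) :=
    fun h => isCompact_Icc.image_of_continuousOn (hcont.mono h)
  have hconn : ∀ {u v : ℝ}, Set.Icc u v ⊆ Set.Icc (0:ℝ) 1 → IsPreconnected (γ '' Set.Icc u v) :=
    fun h => isPreconnected_Icc.image γ (hcont.mono h)
  have hA : ENNReal.ofReal (dist (γ 0) (γ a)) ≤ μH[1] (γ '' Set.Icc 0 a) :=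
    dist_le_H1 (hconn hsub0a) ⟨0, Set.left_mem_Icc.2 ha, rfl⟩ ⟨a, Set.right_mem_Icc.2 ha, rfl⟩
  have hB : ENNReal.ofReal (dist (γ a) (γ b)) ≤ μH[1] (γ '' Set.Icc a b) :=
    dist_le_H1 (hconn hsubab) ⟨a, Set.left_mem_Icc.2 hab, rfl⟩ ⟨b, Set.right_mem_Icc.2 hab, rfl⟩
  have hC : ENNReal.ofReal (dist (γ b) (γ 1)) ≤ μH[1] (γ '' Set.Icc b 1) :=
    dist_le_H1 (hconn hsubb1) ⟨b, Set.left_mem_Icc.2 hb, rfl⟩ ⟨1, Set.right_mem_Icc.2 hb, rfl⟩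
  have hunion : γ '' Set.Icc 0 1 = (γ '' Set.Icc 0 a ∪ γ '' Set.Icc a b) ∪ γ '' Set.Icc b 1 := by
    rw [← Set.image_union, ← Set.image_union, Set.Icc_union_Icc_eq_Icc ha hab,
      Set.Icc_union_Icc_eq_Icc (ha.trans hab) hb]
  have hinter1 : μH[1] (γ '' Set.Icc 0 a ∩ γ '' Set.Icc a b) = 0 := by
    refine measure_mono_null ?_ (measure_singleton (γ a))
    rintro x ⟨⟨s, hs, rfl⟩, ⟨t, ht, het⟩⟩
    have : s = t := hinj (hsub0a hs) (hsubab ht) het.symm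
    have : s = a := le_antisymm hs.2 (this ▸ ht.1)
    simp [this]
  have hinter2 : μH[1] ((γ '' Set.Icc 0 a ∪ γ '' Set.Icc a b) ∩ γ '' Set.Icc b 1) = 0 := by
    refine measure_mono_null ?_ (measure_singleton (γ b))
    rintro x ⟨hx1, ⟨t, ht, rfl⟩⟩
    have hst : ∃ s ∈ Set.Icc (0:ℝ) b, γ s = γ t := by
      rcases hx1 with ⟨s, hs, hes⟩ | ⟨s, hs, hes⟩
      · exact ⟨s, ⟨hs.1, hs.2.trans hab⟩, hes⟩
      · exact ⟨s, ⟨ha.trans hs.1, hs.2⟩, hes⟩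
    rcases hst with ⟨s, hs, hes⟩
    have : s = t := hinj (Set.Icc_subset_Icc le_rfl hb hs) (hsubb1 ht) hes
    have : t = b := le_antisymm (this ▸ hs.2) ht.1
    simp [this]
  have hsplit : μH[1] (γ '' Set.Icc 0 a) + μH[1] (γ '' Set.Icc a b) + μH[1] (γ '' Set.Icc b 1)
      = ENNReal.ofReal (dist (γ 0) (γ 1)) := by
    rw [← h1, hunion, measure_union₀ ((hcomp hsubb1).measurableSet.nullMeasurableSet) hinter2,
      measure_union₀ ((hcomp hsubab).measurableSet.nullMeasurableSet) hinter1]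
  have htri : dist (γ 0) (γ 1) ≤ dist (γ 0) (γ a) + dist (γ a) (γ b) + dist (γ b) (γ 1) :=
    dist_triangle4 _ _ _ _
  have hofsum : ENNReal.ofReal (dist (γ 0) (γ a)) + ENNReal.ofReal (dist (γ a) (γ b))
      + ENNReal.ofReal (dist (γ b) (γ 1))
      = ENNReal.ofReal (dist (γ 0) (γ a) + dist (γ a) (γ b) + dist (γ b) (γ 1)) := by
    rw [← ENNReal.ofReal_add dist_nonneg dist_nonneg,
      ← ENNReal.ofReal_add (add_nonneg dist_nonneg dist_nonneg) dist_nonneg]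
  have hchain : μH[1] (γ '' Set.Icc 0 a) + μH[1] (γ '' Set.Icc a b) + μH[1] (γ '' Set.Icc b 1)
      ≤ ENNReal.ofReal (dist (γ 0) (γ a)) + ENNReal.ofReal (dist (γ a) (γ b))
      + ENNReal.ofReal (dist (γ b) (γ 1)) := by
    rw [hsplit, hofsum]
    exact ENNReal.ofReal_le_ofReal htri
  have hfin : μH[1] (γ '' Set.Icc 0 a) + μH[1] (γ '' Set.Icc a b) + μH[1] (γ '' Set.Icc b 1)
      ≠ ⊤ := hsplit ▸ ENNReal.ofReal_ne_top
  obtain ⟨e1, e2, e3⟩ := three_eq_aux hA hB hC hchain hfin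
  refine ⟨e2, ?_⟩
  have heq : ENNReal.ofReal (dist (γ 0) (γ a) + dist (γ a) (γ b) + dist (γ b) (γ 1))
      = ENNReal.ofReal (dist (γ 0) (γ 1)) := by
    rw [← hofsum, ← e1, ← e2, ← e3, hsplit]
  have hle := (ENNReal.ofReal_le_ofReal_iff dist_nonneg).1 heq.le
  exact le_antisymm hle htri

/-- An arc whose `H¹`-measure equals the distance between its endpoints, which
also equals its diameter, has `H¹(subarc between x and y) = d(x,y)` for all points
`x, y` on it, and is isometric to the segment `[0, diam]`. -/
theorem stmt3 {X : Type*} [MetricSpace X] [MeasurableSpace X] [BorelSpace X]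
    (γ : ℝ → X) (hcont : ContinuousOn γ (Set.Icc 0 1))
    (hinj : Set.InjOn γ (Set.Icc 0 1))
    (h1 : μH[1] (γ '' Set.Icc 0 1) = ENNReal.ofReal (dist (γ 0) (γ 1)))
    (h2 : dist (γ 0) (γ 1) = Metric.diam (γ '' Set.Icc 0 1)) :
    (∀ a ∈ Set.Icc (0:ℝ) 1, ∀ b ∈ Set.Icc (0:ℝ) 1,
      μH[1] (γ '' Set.uIcc a b) = ENNReal.ofReal (dist (γ a) (γ b))) ∧
    Nonempty (↥(γ '' Set.Icc 0 1) ≃ᵢ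
      ↥(Set.Icc (0:ℝ) (Metric.diam (γ '' Set.Icc 0 1)))) := by
  constructor
  · intro a ha b hb
    rcases le_total a b with h | h
    · rw [Set.uIcc_of_le h]
      exact (key_split γ hcont hinj h1 ha.1 h hb.2).1
    · rw [Set.uIcc_of_ge h, dist_comm]
      exact (key_split γ hcont hinj h1 hb.1 h ha.2).1
  · set L := Metric.diam (γ '' Set.Icc 0 1) with hL
    set p := γ 0 with hp
    have hpmem : p ∈ γ '' Set.Icc 0 1 := ⟨0, ⟨le_rfl, zero_le_one⟩, rfl⟩
    have hqmem : γ 1 ∈ γ '' Set.Icc 0 1 := ⟨1, ⟨zero_le_one, le_rfl⟩, rfl⟩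
    have hcompact : IsCompact (γ '' Set.Icc 0 1) :=
      isCompact_Icc.image_of_continuousOn hcont
    have hbdd : Bornology.IsBounded (γ '' Set.Icc 0 1) := hcompact.isBounded
    have hmem : ∀ x ∈ γ '' Set.Icc 0 1, dist p x ∈ Set.Icc (0:ℝ) L :=
      fun x hx => ⟨dist_nonneg, Metric.dist_le_diam_of_mem hbdd hpmem hx⟩
    -- additivity of distance along the arc
    have hadd : ∀ u v : ℝ, 0 ≤ u → u ≤ v → v ≤ 1 →
        dist p (γ u) + dist (γ u) (γ v) = dist p (γ v) := by
      intro u v hu huv hv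
      obtain ⟨-, hsum⟩ := key_split γ hcont hinj h1 hu huv hv
      obtain ⟨-, hsum'⟩ := key_split γ hcont hinj h1 (hu.trans huv) le_rfl hv
      rw [dist_self] at hsum'
      simp only [← hp] at hsum hsum'
      linarith
    have hdist : ∀ x ∈ γ '' Set.Icc 0 1, ∀ y ∈ γ '' Set.Icc 0 1,
        dist (dist p x) (dist p y) = dist x y := by
      rintro _ ⟨u, hu, rfl⟩ _ ⟨v, hv, rfl⟩
      rcases le_total u v with h | h
      · have := hadd u v hu.1 h hv.2
        rw [Real.dist_eq, show dist p (γ u) - dist p (γ v) = -(dist (γ u) (γ v)) by linarith,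
          abs_neg, abs_of_nonneg dist_nonneg]
      · have := hadd v u hv.1 h hu.2
        rw [Real.dist_eq, show dist p (γ u) - dist p (γ v) = dist (γ v) (γ u) by linarith,
          abs_of_nonneg dist_nonneg, dist_comm]
    -- surjectivity onto [0, L]
    have hTconn : IsPreconnected (dist p '' (γ '' Set.Icc 0 1)) :=
      (isPreconnected_Icc.image γ hcont).image _
        ((LipschitzWith.dist_right p).continuous.continuousOn)
    have hTsub : Set.Icc (0:ℝ) L ⊆ dist p '' (γ '' Set.Icc 0 1) :=
      hTconn.Icc_subset ⟨p, hpmem, dist_self p⟩ ⟨γ 1, hqmem, h2⟩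
    -- build the isometry
    refine ⟨IsometryEquiv.mk (Equiv.ofBijective
      (fun x : ↥(γ '' Set.Icc 0 1) => (⟨dist p x.1, hmem x.1 x.2⟩ :
        ↥(Set.Icc (0:ℝ) L))) ⟨?_, ?_⟩) ?_⟩
    · intro x y hxy
      have h0 : dist p x.1 = dist p y.1 := congrArg Subtype.val hxy
      have := hdist x.1 x.2 y.1 y.2
      rw [h0, dist_self] at this
      exact Subtype.ext (eq_of_dist_eq_zero this.symm)
    · rintro ⟨z, hz⟩
      rcases hTsub hz with ⟨x, hx, hxz⟩
      exact ⟨⟨x, hx⟩, Subtype.ext hxz⟩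
    · refine Isometry.of_dist_eq fun x y => ?_
      rw [Subtype.dist_eq, Subtype.dist_eq]
      exact hdist x.1 x.2 y.1 y.2
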